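/- Let u = so(3) ⊕ so(3) with the inner product for which the six standard basis elements E_{12}, E_{13}, E_{23} in each factor are orthonormal, let k = so(2) ⊕ so(2) embedded as the span of (E_{23}, 0) and (0, E_{23}), and let p be its orthogonal complement (the set of pairs of matrices whose only nonzero entries are in positions (1,2),(1,3),(2,1),(3,1)). Then for any orthonormal pair v₁, v₂ ∈ p with v₁ in the maximal abelian subspace a (i.e., v₁ = (x₁ E_{12}', x₁' E_{12}'') with x₁² + x₁'² = 1, where E_{12}' denotes the (1,2)-elementary skew matrix), one has ‖[v₁, v₂]‖² ≤ 1, with equality if and only if v₁ and v₂ both lie entirely in one factor so(3), with v₁ the (1,2)-elementary skew matrix and v₂ = ± the (1,3)-elementary skew matrix of that factor. -/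

import Mathlib

open Matrix

/-- The elementary skew-symmetric matrix `E_{ab}` with `+1` in entry `(a,b)` and `-1`
in entry `(b,a)`. -/
noncomputable def Eskew {k : ℕ} (a b : Fin k) : Matrix (Fin k) (Fin k) ℝ :=
  Matrix.single a b 1 - Matrix.single b a 1

/-- The inner product on `so(3) ⊕ so(3)` for which the six elementary skew matrices are
orthonormal. -/
noncomputable def ip2 (X Y : Matrix (Fin 3) (Fin 3) ℝ × Matrix (Fin 3) (Fin 3) ℝ) : ℝ :=
  (1 / 2) * ((X.1ᵀ * Y.1).trace + (X.2ᵀ * Y.2).trace)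

/-- The componentwise matrix commutator on `so(3) ⊕ so(3)`. -/
def brkt2 (X Y : Matrix (Fin 3) (Fin 3) ℝ × Matrix (Fin 3) (Fin 3) ℝ) :
    Matrix (Fin 3) (Fin 3) ℝ × Matrix (Fin 3) (Fin 3) ℝ :=
  (X.1 * Y.1 - Y.1 * X.1, X.2 * Y.2 - Y.2 * X.2)

lemma stmt5_key (x₁ x₁' x₂ y₂ x₂' y₂' : ℝ)
    (hx₁ : 0 ≤ x₁) (hx₁' : 0 ≤ x₁') (hv₁ : x₁ ^ 2 + x₁' ^ 2 = 1)
    (hv₂ : x₂ ^ 2 + y₂ ^ 2 + x₂' ^ 2 + y₂' ^ 2 = 1) :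
    x₁^2*y₂^2 + x₁'^2*y₂'^2 ≤ 1 ∧
    (x₁^2*y₂^2 + x₁'^2*y₂'^2 = 1 ↔
      (x₁=1 ∧ x₁'=0 ∧ x₂=0 ∧ x₂'=0 ∧ y₂'=0 ∧ (y₂=1 ∨ y₂=-1)) ∨
      (x₁=0 ∧ x₁'=1 ∧ x₂=0 ∧ x₂'=0 ∧ y₂=0 ∧ (y₂'=1 ∨ y₂'=-1))) := by
  have hprod : (x₁^2 + x₁'^2) * (x₂^2 + y₂^2 + x₂'^2 + y₂'^2) = 1 := by rw [hv₁, hv₂]; ring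
  have hid : 1 - (x₁^2*y₂^2 + x₁'^2*y₂'^2) =
      (x₁*x₂)^2 + (x₁*x₂')^2 + (x₁*y₂')^2 + (x₁'*x₂)^2 + (x₁'*y₂)^2 + (x₁'*x₂')^2 := by
    linear_combination -hprod
  have s1 := sq_nonneg (x₁*x₂); have s2 := sq_nonneg (x₁*x₂'); have s3 := sq_nonneg (x₁*y₂')
  have s4 := sq_nonneg (x₁'*x₂); have s5 := sq_nonneg (x₁'*y₂); have s6 := sq_nonneg (x₁'*x₂')
  constructor
  · linarith
  constructor
  · intro heq
    have e1 : x₁*x₂ = 0 := by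
      have : (x₁*x₂)^2 = 0 := le_antisymm (by linarith) s1
      exact pow_eq_zero_iff two_ne_zero |>.mp this
    have e2 : x₁*x₂' = 0 := by
      have : (x₁*x₂')^2 = 0 := le_antisymm (by linarith) s2
      exact pow_eq_zero_iff two_ne_zero |>.mp this
    have e3 : x₁*y₂' = 0 := by
      have : (x₁*y₂')^2 = 0 := le_antisymm (by linarith) s3
      exact pow_eq_zero_iff two_ne_zero |>.mp this
    have e4 : x₁'*x₂ = 0 := by
      have : (x₁'*x₂)^2 = 0 := le_antisymm (by linarith) s4
      exact pow_eq_zero_iff two_ne_zero |>.mp this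
    have e5 : x₁'*y₂ = 0 := by
      have : (x₁'*y₂)^2 = 0 := le_antisymm (by linarith) s5
      exact pow_eq_zero_iff two_ne_zero |>.mp this
    have e6 : x₁'*x₂' = 0 := by
      have : (x₁'*x₂')^2 = 0 := le_antisymm (by linarith) s6
      exact pow_eq_zero_iff two_ne_zero |>.mp this
    rcases eq_or_ne x₁' 0 with h | h
    · left
      subst h
      have hx1 : x₁ = 1 := by nlinarith
      subst hx1
      have hx2 : x₂ = 0 := by linarith [e1]
      have hx2' : x₂' = 0 := by linarith [e2]
      have hy2' : y₂' = 0 := by linarith [e3]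
      subst hx2; subst hx2'; subst hy2'
      refine ⟨rfl, rfl, rfl, rfl, rfl, ?_⟩
      have hy : y₂^2 = 1 := by linarith
      have : (y₂ - 1) * (y₂ + 1) = 0 := by linear_combination hy
      rcases mul_eq_zero.mp this with h' | h'
      · left; linarith
      · right; linarith
    · right
      have hx2 : x₂ = 0 := (mul_eq_zero.mp e4).resolve_left h
      have hy2 : y₂ = 0 := (mul_eq_zero.mp e5).resolve_left h
      have hx2' : x₂' = 0 := (mul_eq_zero.mp e6).resolve_left h
      subst hx2; subst hy2; subst hx2'
      have hy2' : y₂'^2 = 1 := by linarith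
      have hx1 : x₁ = 0 := by
        rcases mul_eq_zero.mp e3 with h' | h'
        · exact h'
        · rw [h'] at hy2'; norm_num at hy2'
      subst hx1
      have hx1' : x₁' = 1 := by nlinarith
      refine ⟨rfl, hx1', rfl, rfl, rfl, ?_⟩
      have : (y₂' - 1) * (y₂' + 1) = 0 := by linear_combination hy2'
      rcases mul_eq_zero.mp this with h' | h'
      · left; linarith
      · right; linarith
  · rintro (⟨rfl, rfl, rfl, rfl, rfl, (rfl | rfl)⟩ | ⟨rfl, rfl, rfl, rfl, rfl, (rfl | rfl)⟩) <;> norm_num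

theorem stmt5 (x₁ x₁' x₂ y₂ x₂' y₂' : ℝ)
    (hx₁ : 0 ≤ x₁) (hx₁' : 0 ≤ x₁') (hv₁ : x₁ ^ 2 + x₁' ^ 2 = 1)
    (hv₂ : x₂ ^ 2 + y₂ ^ 2 + x₂' ^ 2 + y₂' ^ 2 = 1)
    (v₁ : Matrix (Fin 3) (Fin 3) ℝ × Matrix (Fin 3) (Fin 3) ℝ)
    (v₂ : Matrix (Fin 3) (Fin 3) ℝ × Matrix (Fin 3) (Fin 3) ℝ)
    (hv₁def : v₁ = (x₁ • Eskew 0 1, x₁' • Eskew 0 1))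
    (hv₂def : v₂ = (x₂ • Eskew 0 1 + y₂ • Eskew 0 2, x₂' • Eskew 0 1 + y₂' • Eskew 0 2))
    (horth : ip2 v₁ v₂ = 0) :
    ip2 (brkt2 v₁ v₂) (brkt2 v₁ v₂) ≤ 1 ∧
    (ip2 (brkt2 v₁ v₂) (brkt2 v₁ v₂) = 1 ↔
      ((v₁ = (Eskew 0 1, 0) ∧ (v₂ = (Eskew 0 2, 0) ∨ v₂ = (-(Eskew 0 2), 0))) ∨
       (v₁ = (0, Eskew 0 1) ∧ (v₂ = (0, Eskew 0 2) ∨ v₂ = (0, -(Eskew 0 2)))))) := by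
  subst hv₁def; subst hv₂def
  have hb : ip2 (brkt2 (x₁ • Eskew 0 1, x₁' • Eskew 0 1)
        (x₂ • Eskew 0 1 + y₂ • Eskew 0 2, x₂' • Eskew 0 1 + y₂' • Eskew 0 2))
      (brkt2 (x₁ • Eskew 0 1, x₁' • Eskew 0 1)
        (x₂ • Eskew 0 1 + y₂ • Eskew 0 2, x₂' • Eskew 0 1 + y₂' • Eskew 0 2)) =
      x₁^2*y₂^2 + x₁'^2*y₂'^2 := by
    simp [ip2, brkt2, Eskew, Matrix.trace, Matrix.mul_apply, Fin.sum_univ_three,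
      Matrix.single, Matrix.transpose_apply, Matrix.add_apply, Matrix.smul_apply,
      Matrix.sub_apply]
    ring
  obtain ⟨hle, hiff⟩ := stmt5_key x₁ x₁' x₂ y₂ x₂' y₂' hx₁ hx₁' hv₁ hv₂
  rw [hb]
  refine ⟨hle, hiff.trans ?_⟩
  constructor
  · rintro (⟨rfl, rfl, rfl, rfl, rfl, (rfl | rfl)⟩ | ⟨rfl, rfl, rfl, rfl, rfl, (rfl | rfl)⟩)
    · exact Or.inl ⟨by simp [Prod.ext_iff], Or.inl (by simp [Prod.ext_iff])⟩
    · exact Or.inl ⟨by simp [Prod.ext_iff], Or.inr (by simp [Prod.ext_iff])⟩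
    · exact Or.inr ⟨by simp [Prod.ext_iff], Or.inl (by simp [Prod.ext_iff])⟩
    · exact Or.inr ⟨by simp [Prod.ext_iff], Or.inr (by simp [Prod.ext_iff])⟩
  · rintro (⟨h1, (h2 | h2)⟩ | ⟨h1, (h2 | h2)⟩) <;>
      rw [Prod.mk.injEq] at h1 h2 <;> obtain ⟨h1a, h1b⟩ := h1 <;> obtain ⟨h2a, h2b⟩ := h2
    · refine Or.inl ⟨?_, ?_, ?_, ?_, ?_, Or.inl ?_⟩
      · have := congrFun (congrFun h1a 0) 1
        simpa [Eskew, Matrix.single, Matrix.smul_apply] using this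
      · have := congrFun (congrFun h1b 0) 1
        simpa [Eskew, Matrix.single, Matrix.smul_apply] using this
      · have := congrFun (congrFun h2a 0) 1
        simpa [Eskew, Matrix.single, Matrix.add_apply, Matrix.smul_apply, Matrix.sub_apply] using this
      · have := congrFun (congrFun h2b 0) 1
        simpa [Eskew, Matrix.single, Matrix.add_apply, Matrix.smul_apply, Matrix.sub_apply] using this
      · have := congrFun (congrFun h2b 0) 2
        simpa [Eskew, Matrix.single, Matrix.add_apply, Matrix.smul_apply, Matrix.sub_apply] using this
      · have := congrFun (congrFun h2a 0) 2
        simpa [Eskew, Matrix.single, Matrix.add_apply, Matrix.smul_apply, Matrix.sub_apply] using this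
    · refine Or.inl ⟨?_, ?_, ?_, ?_, ?_, Or.inr ?_⟩
      · have := congrFun (congrFun h1a 0) 1
        simpa [Eskew, Matrix.single, Matrix.smul_apply] using this
      · have := congrFun (congrFun h1b 0) 1
        simpa [Eskew, Matrix.single, Matrix.smul_apply] using this
      · have := congrFun (congrFun h2a 0) 1
        simpa [Eskew, Matrix.single, Matrix.add_apply, Matrix.smul_apply, Matrix.sub_apply, Matrix.neg_apply] using this
      · have := congrFun (congrFun h2b 0) 1
        simpa [Eskew, Matrix.single, Matrix.add_apply, Matrix.smul_apply, Matrix.sub_apply] using this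
      · have := congrFun (congrFun h2b 0) 2
        simpa [Eskew, Matrix.single, Matrix.add_apply, Matrix.smul_apply, Matrix.sub_apply] using this
      · have := congrFun (congrFun h2a 0) 2
        simpa [Eskew, Matrix.single, Matrix.add_apply, Matrix.smul_apply, Matrix.sub_apply, Matrix.neg_apply] using this
    · refine Or.inr ⟨?_, ?_, ?_, ?_, ?_, Or.inl ?_⟩
      · have := congrFun (congrFun h1a 0) 1
        simpa [Eskew, Matrix.single, Matrix.smul_apply] using this
      · have := congrFun (congrFun h1b 0) 1
        simpa [Eskew, Matrix.single, Matrix.smul_apply] using this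
      · have := congrFun (congrFun h2a 0) 1
        simpa [Eskew, Matrix.single, Matrix.add_apply, Matrix.smul_apply, Matrix.sub_apply] using this
      · have := congrFun (congrFun h2b 0) 1
        simpa [Eskew, Matrix.single, Matrix.add_apply, Matrix.smul_apply, Matrix.sub_apply] using this
      · have := congrFun (congrFun h2a 0) 2
        simpa [Eskew, Matrix.single, Matrix.add_apply, Matrix.smul_apply, Matrix.sub_apply] using this
      · have := congrFun (congrFun h2b 0) 2
        simpa [Eskew, Matrix.single, Matrix.add_apply, Matrix.smul_apply, Matrix.sub_apply] using this
    · refine Or.inr ⟨?_, ?_, ?_, ?_, ?_, Or.inr ?_⟩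
      · have := congrFun (congrFun h1a 0) 1
        simpa [Eskew, Matrix.single, Matrix.smul_apply] using this
      · have := congrFun (congrFun h1b 0) 1
        simpa [Eskew, Matrix.single, Matrix.smul_apply] using this
      · have := congrFun (congrFun h2a 0) 1
        simpa [Eskew, Matrix.single, Matrix.add_apply, Matrix.smul_apply, Matrix.sub_apply] using this
      · have := congrFun (congrFun h2b 0) 1
        simpa [Eskew, Matrix.single, Matrix.add_apply, Matrix.smul_apply, Matrix.sub_apply, Matrix.neg_apply] using this
      · have := congrFun (congrFun h2a 0) 2
        simpa [Eskew, Matrix.single, Matrix.add_apply, Matrix.smul_apply, Matrix.sub_apply] using this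
      · have := congrFun (congrFun h2b 0) 2
        simpa [Eskew, Matrix.single, Matrix.add_apply, Matrix.smul_apply, Matrix.sub_apply, Matrix.neg_apply] using this
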